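/- Let ABCDEF be a convex hexagon such that for each pair of opposite sides (AB and DE, BC and EF, CD and FA), the distance between the midpoints of the two sides equals (√3/2) times the sum of their lengths. Then all interior angles of the hexagon are equal (each equals 120°). -/

import Mathlib

open EuclideanGeometry Real
open scoped RealInnerProductSpace

private lemma angle120 {E : Type*} [NormedAddCommGroup E] [InnerProductSpace ℝ E]
    {u w : E} (hu : u ≠ 0) (hw : w ≠ 0)
    (h : 2 * ⟪u, w⟫ = -(‖u‖ * ‖w‖)) :
    InnerProductGeometry.angle u w = 2 * π / 3 := by
  have h1 : (0:ℝ) < ‖u‖ := norm_pos_iff.mpr hu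
  have h2 : (0:ℝ) < ‖w‖ := norm_pos_iff.mpr hw
  have hq : ⟪u, w⟫ / (‖u‖ * ‖w‖) = -(1/2) := by
    rw [div_eq_iff (by positivity)]
    linarith
  unfold InnerProductGeometry.angle
  rw [hq]
  have hc : Real.cos (2 * π / 3) = -(1/2) := by
    have h3 : (2:ℝ) * π / 3 = π - π/3 := by ring
    rw [h3, Real.cos_pi_sub, Real.cos_pi_div_three]
  rw [← hc, Real.arccos_cos (by positivity) (by linarith [Real.pi_pos])]

private lemma angle120_smul {E : Type*} [NormedAddCommGroup E] [InnerProductSpace ℝ E]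
    {x y : E} {p q : ℝ} (hp : 0 < p) (hq : 0 < q)
    (hx : x ≠ 0) (hy : y ≠ 0) (h : 2 * ⟪x, y⟫ = -(‖x‖ * ‖y‖)) :
    InnerProductGeometry.angle (p • x) (q • y) = 2 * π / 3 := by
  apply angle120 (smul_ne_zero hp.ne' hx) (smul_ne_zero hq.ne' hy)
  rw [real_inner_smul_left, real_inner_smul_right, norm_smul, norm_smul,
      Real.norm_eq_abs, Real.norm_eq_abs, abs_of_pos hp, abs_of_pos hq]
  linear_combination (p*q) * h

private lemma ray_decomp {E : Type*} [NormedAddCommGroup E] [InnerProductSpace ℝ E]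
    {x y d : E} (hxy : y = x + d) (hx : x ≠ 0) (hy : y ≠ 0)
    (hinner : ⟪x, y⟫ = -(‖x‖ * ‖y‖)) :
    x = (‖x‖/(‖x‖+‖y‖)) • (-d) ∧ y = (‖y‖/(‖x‖+‖y‖)) • d := by
  have h1 : (0:ℝ) < ‖x‖ := norm_pos_iff.mpr hx
  have h2 : (0:ℝ) < ‖y‖ := norm_pos_iff.mpr hy
  have hs : (0:ℝ) < ‖x‖ + ‖y‖ := by linarith
  have key : ⟪x, -y⟫ = ‖x‖ * ‖-y‖ := by
    rw [inner_neg_right, norm_neg]; linarith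
  have h3 := inner_eq_norm_mul_iff_real.mp key
  -- h3 : ‖-y‖ • x = ‖x‖ • -y
  rw [norm_neg] at h3
  set m := ‖x‖ with hm
  set n := ‖y‖ with hn
  rw [hxy] at h3
  -- h3 : n • x = m • -(x + d)
  have h4 : (n + m) • x = m • (-d) := by
    rw [add_smul, h3]; module
  have h5 : x = ((n + m)⁻¹ * m) • (-d) := by
    rw [← smul_smul, ← h4, inv_smul_smul₀ (by linarith)]
  constructor
  · rw [h5]; congr 1
    rw [div_eq_inv_mul, add_comm n m]
  · have hsc : 1 - (n+m)⁻¹ * m = n/(m+n) := by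
      field_simp
      ring
    rw [hxy, h5, ← hsc]
    module

private lemma midnorm {E : Type*} [NormedAddCommGroup E] [NormedSpace ℝ E]
    (x y z w : E) :
    dist (midpoint ℝ x y) (midpoint ℝ z w) = ‖(z - x) + (w - y)‖ / 2 := by
  rw [dist_eq_norm, midpoint_eq_smul_add, midpoint_eq_smul_add, ← smul_sub, norm_smul,
    show (x + y) - (z + w) = -((z - x) + (w - y)) by abel, norm_neg]
  have : ‖(⅟2 : ℝ)‖ = 1/2 := by
    rw [invOf_eq_inv (2:ℝ), Real.norm_eq_abs]
    norm_num
  rw [this]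
  ring
set_option maxHeartbeats 1000000 in
/-- IMO 2003 P3: In a convex hexagon `v 0 v 1 v 2 v 3 v 4 v 5`, if for each pair of
opposite sides the distance between their midpoints is `√3/2` times the sum of their
lengths, then the hexagon is equiangular (every interior angle equals `2π/3`).
Convexity (in the listed cyclic order) is encoded by: for every side, the remaining
vertices lie strictly on the same side of the line through that side. -/
theorem imo2003_p3 (v : Fin 6 → EuclideanSpace ℝ (Fin 2))
    (hconv : ∀ i j k : Fin 6, j ≠ i → j ≠ i + 1 → k ≠ i → k ≠ i + 1 →
      (affineSpan ℝ {v i, v (i + 1)}).SSameSide (v j) (v k))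
    (hmid : ∀ i : Fin 6,
      dist (midpoint ℝ (v i) (v (i + 1))) (midpoint ℝ (v (i + 3)) (v (i + 4)))
        = Real.sqrt 3 / 2 * (dist (v i) (v (i + 1)) + dist (v (i + 3)) (v (i + 4)))) :
    ∀ i : Fin 6, ∠ (v (i - 1)) (v i) (v (i + 1)) = 2 * π / 3 := by
  have key : ∀ i j : Fin 6, j ≠ i → j ≠ i + 1 → v j ∉ affineSpan ℝ {v i, v (i + 1)} :=
    fun i j h1 h2 => (hconv i j j h1 h2 h1 h2).2.1
  -- adjacent vertices are distinct
  have hvne : ∀ i : Fin 6, v (i + 1) ≠ v i := by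
    intro i h
    have e : i + 5 + 1 = i := by
      rw [add_assoc, show (5 + 1 : Fin 6) = 0 by decide, add_zero]
    refine key (i + 5) (i + 1) (fun H => ?_) (fun H => ?_) ?_
    · exact absurd (add_left_cancel H) (by decide)
    · rw [e] at H
      exact absurd (add_left_cancel (show i + 1 = i + 0 by rw [add_zero]; exact H)) (by decide)
    · rw [e, h]
      exact right_mem_affineSpan_pair ℝ _ _
  -- abbreviations
  set a : EuclideanSpace ℝ (Fin 2) := v 3 - v 0 with ha
  set b : EuclideanSpace ℝ (Fin 2) := v 4 - v 1 with hbd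
  set c : EuclideanSpace ℝ (Fin 2) := v 5 - v 2 with hc
  set s0 : EuclideanSpace ℝ (Fin 2) := v 1 - v 0 with hs0
  set s1 : EuclideanSpace ℝ (Fin 2) := v 2 - v 1 with hs1
  set s2 : EuclideanSpace ℝ (Fin 2) := v 3 - v 2 with hs2
  set s3 : EuclideanSpace ℝ (Fin 2) := v 4 - v 3 with hs3
  set s4 : EuclideanSpace ℝ (Fin 2) := v 5 - v 4 with hs4
  set s5 : EuclideanSpace ℝ (Fin 2) := v 0 - v 5 with hs5
  clear_value a b c s0 s1 s2 s3 s4 s5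
  have hs0ne : s0 ≠ 0 := by rw [hs0, sub_ne_zero]; simpa using hvne 0
  have hs1ne : s1 ≠ 0 := by rw [hs1, sub_ne_zero]; simpa using hvne 1
  have hs2ne : s2 ≠ 0 := by rw [hs2, sub_ne_zero]; simpa using hvne 2
  have hs3ne : s3 ≠ 0 := by rw [hs3, sub_ne_zero]; simpa using hvne 3
  have hs4ne : s4 ≠ 0 := by rw [hs4, sub_ne_zero]; simpa using hvne 4
  have hs5ne : s5 ≠ 0 := by rw [hs5, sub_ne_zero]; simpa using hvne 5
  -- the midpoint conditions, in norm form
  have H0 : ‖a + b‖ = Real.sqrt 3 * (‖s0‖ + ‖s3‖) := by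
    have h := hmid 0
    simp only [Fin.reduceAdd] at h
    rw [midnorm, dist_eq_norm', dist_eq_norm', ← ha, ← hbd, ← hs0, ← hs3] at h
    linarith
  have H1 : ‖b + c‖ = Real.sqrt 3 * (‖s1‖ + ‖s4‖) := by
    have h := hmid 1
    simp only [Fin.reduceAdd] at h
    rw [midnorm, dist_eq_norm', dist_eq_norm', ← hbd, ← hc, ← hs1, ← hs4] at h
    linarith
  have H2 : ‖c - a‖ = Real.sqrt 3 * (‖s2‖ + ‖s5‖) := by
    have h := hmid 2
    simp only [Fin.reduceAdd] at h
    rw [midnorm, dist_eq_norm', dist_eq_norm', ← hs2, ← hs5,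
      show v 5 - v 2 + (v 0 - v 3) = c - a by rw [hc, ha]; abel] at h
    linarith
  have sq3 : Real.sqrt 3 ^ 2 = 3 := Real.sq_sqrt (by norm_num)
  have G0 : ‖a + b‖^2 = 3 * (‖s0‖ + ‖s3‖)^2 := by rw [H0, mul_pow, sq3]
  have G1 : ‖b + c‖^2 = 3 * (‖s1‖ + ‖s4‖)^2 := by rw [H1, mul_pow, sq3]
  have G2 : ‖c - a‖^2 = 3 * (‖s2‖ + ‖s5‖)^2 := by rw [H2, mul_pow, sq3]
  have I0 : s0 - s3 = a - b := by rw [hs0, hs3, ha, hbd]; abel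
  have I1 : s1 - s4 = b - c := by rw [hs1, hs4, hbd, hc]; abel
  have I2 : s2 - s5 = c + a := by rw [hs2, hs5, hc, ha]; abel
  have T0 : ‖a - b‖ ≤ ‖s0‖ + ‖s3‖ := by rw [← I0]; exact norm_sub_le _ _
  have T1 : ‖b - c‖ ≤ ‖s1‖ + ‖s4‖ := by rw [← I1]; exact norm_sub_le _ _
  have T2 : ‖c + a‖ ≤ ‖s2‖ + ‖s5‖ := by rw [← I2]; exact norm_sub_le _ _
  have U0 : ‖a - b‖^2 ≤ (‖s0‖ + ‖s3‖)^2 := pow_le_pow_left₀ (norm_nonneg _) T0 2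
  have U1 : ‖b - c‖^2 ≤ (‖s1‖ + ‖s4‖)^2 := pow_le_pow_left₀ (norm_nonneg _) T1 2
  have U2 : ‖c + a‖^2 ≤ (‖s2‖ + ‖s5‖)^2 := pow_le_pow_left₀ (norm_nonneg _) T2 2
  have ineq0 : 2*‖a‖^2 + 2*‖b‖^2 ≤ 8 * ⟪a, b⟫ := by
    linarith [norm_add_sq_real a b, norm_sub_sq_real a b, G0, U0]
  have ineq1 : 2*‖b‖^2 + 2*‖c‖^2 ≤ 8 * ⟪b, c⟫ := by
    linarith [norm_add_sq_real b c, norm_sub_sq_real b c, G1, U1]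
  have ineq2 : 2*‖c‖^2 + 2*‖a‖^2 ≤ -(8 * ⟪c, a⟫) := by
    have e1 := norm_sub_sq_real c a
    have e2 := norm_add_sq_real c a
    linarith [G2, U2, e1, e2]
  have hca : ⟪c, a⟫ = ⟪a, c⟫ := real_inner_comm a c
  have hSexp : ‖a - b + c‖^2 = ‖a‖^2 + ‖b‖^2 + ‖c‖^2 - 2*⟪a,b⟫ - 2*⟪b,c⟫ + 2*⟪a,c⟫ := by
    rw [show a - b + c = (a - b) + c from rfl, norm_add_sq_real, norm_sub_sq_real,
      inner_sub_left]
    ring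
  have hS0 : ‖a - b + c‖^2 = 0 := by
    linarith [ineq0, ineq1, ineq2, hSexp, hca, sq_nonneg ‖a - b + c‖]
  have hb : b = a + c := by
    have h := norm_eq_zero.mp ((pow_eq_zero_iff (by norm_num : 2 ≠ 0)).mp hS0)
    rw [sub_add_eq_add_sub, sub_eq_zero] at h
    exact h.symm
  have eq0 : 8 * ⟪a,b⟫ = 2*‖a‖^2 + 2*‖b‖^2 := by linarith [hSexp, hS0]
  have eq1 : 8 * ⟪b,c⟫ = 2*‖b‖^2 + 2*‖c‖^2 := by linarith [hSexp, hS0]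
  have eq2 : -(8 * ⟪c,a⟫) = 2*‖c‖^2 + 2*‖a‖^2 := by linarith [hSexp, hS0]
  -- inner product values
  have hab' : ⟪a,b⟫ = ‖a‖^2 + ⟪a,c⟫ := by
    rw [hb, inner_add_right, real_inner_self_eq_norm_sq]
  have hBB : ‖b‖^2 = ‖a‖^2 + 2*⟪a,c⟫ + ‖c‖^2 := by rw [hb, norm_add_sq_real]
  have hAC : ‖a‖^2 = ‖c‖^2 := by linarith
  have hacN : 2 * ⟪a,c⟫ = -‖a‖^2 := by linarith
  have habN : 2 * ⟪a,b⟫ = ‖a‖^2 := by linarith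
  have hBA : ‖b‖^2 = ‖a‖^2 := by linarith
  have hbc' : ⟪b,c⟫ = ⟪a,c⟫ + ‖c‖^2 := by
    rw [hb, inner_add_left, real_inner_self_eq_norm_sq]
  have hbcN : 2 * ⟪b,c⟫ = ‖a‖^2 := by linarith
  -- nonvanishing
  have ha0 : a ≠ 0 := by
    rw [ha, sub_ne_zero]
    intro h
    exact key 0 3 (by decide) (by decide) (h ▸ left_mem_affineSpan_pair ℝ (v 0) (v (0+1)))
  have hA : 0 < ‖a‖ := norm_pos_iff.mpr ha0
  have hnc : ‖c‖ = ‖a‖ := by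
    rw [← Real.sqrt_sq (norm_nonneg c), ← Real.sqrt_sq (norm_nonneg a), hAC]
  have hnb : ‖b‖ = ‖a‖ := by
    rw [← Real.sqrt_sq (norm_nonneg b), ← Real.sqrt_sq (norm_nonneg a), hBA]
  have hc0 : c ≠ 0 := by
    intro h
    rw [h, norm_zero] at hnc
    exact absurd hnc.symm hA.ne'
  have hb0 : b ≠ 0 := by
    intro h
    rw [h, norm_zero] at hnb
    exact absurd hnb.symm hA.ne'
  -- equality analysis for each pair of opposite sides
  have P0 : ⟪s0, s3⟫ = -(‖s0‖ * ‖s3‖) := by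
    have e := norm_sub_sq_real s0 s3
    rw [I0] at e
    have h3 : ‖a + b‖^2 = 3 * ‖a - b‖^2 := by
      linarith [norm_add_sq_real a b, norm_sub_sq_real a b, eq0]
    have hx : (‖s0‖ + ‖s3‖)^2 = ‖s0‖^2 + 2*(‖s0‖*‖s3‖) + ‖s3‖^2 := by ring
    linarith [G0, h3, e, hx]
  have P1 : ⟪s1, s4⟫ = -(‖s1‖ * ‖s4‖) := by
    have e := norm_sub_sq_real s1 s4
    rw [I1] at e
    have h3 : ‖b + c‖^2 = 3 * ‖b - c‖^2 := by
      linarith [norm_add_sq_real b c, norm_sub_sq_real b c, eq1]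
    have hx : (‖s1‖ + ‖s4‖)^2 = ‖s1‖^2 + 2*(‖s1‖*‖s4‖) + ‖s4‖^2 := by ring
    linarith [G1, h3, e, hx]
  have P2 : ⟪s2, s5⟫ = -(‖s2‖ * ‖s5‖) := by
    have e := norm_sub_sq_real s2 s5
    rw [I2] at e
    have h3 : ‖c - a‖^2 = 3 * ‖c + a‖^2 := by
      linarith [norm_add_sq_real c a, norm_sub_sq_real c a, eq2]
    have hx : (‖s2‖ + ‖s5‖)^2 = ‖s2‖^2 + 2*(‖s2‖*‖s5‖) + ‖s5‖^2 := by ring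
    linarith [G2, h3, e, hx]
  -- decompositions of the sides along the diagonals
  have hs3eq : s3 = s0 + c := by
    have h1 : s3 - s0 = b - a := by rw [hs3, hs0, hbd, ha]; abel
    rw [hb, add_sub_cancel_left] at h1
    rw [← h1]; abel
  have hs4eq : s4 = s1 + (-a) := by
    have h1 : s4 - s1 = c - b := by rw [hs4, hs1, hc, hbd]; abel
    rw [hb] at h1
    have h2 : s4 - s1 = -a := by rw [h1]; abel
    rw [← h2]; abel
  have hs5eq : s5 = s2 + (-b) := by
    have h1 : s5 - s2 = -b := by
      have h2 : s5 - s2 = -(a + c) := by rw [hs5, hs2, ha, hc]; abel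
      rw [h2, ← hb]
    rw [← h1]; abel
  obtain ⟨ds0, ds3⟩ := ray_decomp hs3eq hs0ne hs3ne P0
  obtain ⟨ds1, ds4⟩ := ray_decomp hs4eq hs1ne hs4ne P1
  obtain ⟨ds2, ds5⟩ := ray_decomp hs5eq hs2ne hs5ne P2
  rw [neg_neg] at ds1
  rw [neg_neg] at ds2
  -- positive coefficients
  have m0 : (0:ℝ) < ‖s0‖ := norm_pos_iff.mpr hs0ne
  have m1 : (0:ℝ) < ‖s1‖ := norm_pos_iff.mpr hs1ne
  have m2 : (0:ℝ) < ‖s2‖ := norm_pos_iff.mpr hs2ne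
  have m3 : (0:ℝ) < ‖s3‖ := norm_pos_iff.mpr hs3ne
  have m4 : (0:ℝ) < ‖s4‖ := norm_pos_iff.mpr hs4ne
  have m5 : (0:ℝ) < ‖s5‖ := norm_pos_iff.mpr hs5ne
  have pu0 : (0:ℝ) < ‖s0‖/(‖s0‖+‖s3‖) := by positivity
  have pw0 : (0:ℝ) < ‖s3‖/(‖s0‖+‖s3‖) := by positivity
  have pu1 : (0:ℝ) < ‖s1‖/(‖s1‖+‖s4‖) := by positivity
  have pw1 : (0:ℝ) < ‖s4‖/(‖s1‖+‖s4‖) := by positivity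
  have pu2 : (0:ℝ) < ‖s2‖/(‖s2‖+‖s5‖) := by positivity
  have pw2 : (0:ℝ) < ‖s5‖/(‖s2‖+‖s5‖) := by positivity
  -- base angle facts
  have na0 : -a ≠ 0 := neg_ne_zero.mpr ha0
  have nb0 : -b ≠ 0 := neg_ne_zero.mpr hb0
  have nc0 : -c ≠ 0 := neg_ne_zero.mpr hc0
  have fb_nc : 2 * ⟪b, -c⟫ = -(‖b‖ * ‖-c‖) := by
    rw [inner_neg_right, norm_neg, hnb, hnc]
    linear_combination -hbcN
  have fc_a : 2 * ⟪c, a⟫ = -(‖c‖ * ‖a‖) := by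
    rw [hnc, hca]
    linear_combination hacN
  have fna_b : 2 * ⟪-a, b⟫ = -(‖-a‖ * ‖b‖) := by
    rw [inner_neg_left, norm_neg, hnb]
    linear_combination -habN
  have fnb_c : 2 * ⟪-b, c⟫ = -(‖-b‖ * ‖c‖) := by
    rw [inner_neg_left, norm_neg, hnb, hnc]
    linear_combination -hbcN
  have fnc_na : 2 * ⟪-c, -a⟫ = -(‖-c‖ * ‖-a‖) := by
    rw [inner_neg_left, inner_neg_right, neg_neg, norm_neg, norm_neg, hnc, hca]
    linear_combination hacN
  have fa_nb : 2 * ⟪a, -b⟫ = -(‖a‖ * ‖-b‖) := by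
    rw [inner_neg_right, norm_neg, hnb]
    linear_combination -habN
  -- the twelve side representations
  have r0u : v 5 - v 0 = (‖s5‖/(‖s2‖+‖s5‖)) • b := by
    have h1 : v 5 - v 0 = -s5 := by rw [hs5]; abel
    rw [h1]; conv_lhs => rw [ds5]
    rw [smul_neg, neg_neg]
  have r0w : v 1 - v 0 = (‖s0‖/(‖s0‖+‖s3‖)) • (-c) := by
    conv_lhs => rw [← hs0, ds0]
  have r1u : v 0 - v 1 = (‖s0‖/(‖s0‖+‖s3‖)) • c := by
    have h1 : v 0 - v 1 = -s0 := by rw [hs0]; abel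
    rw [h1]; conv_lhs => rw [ds0]
    rw [smul_neg, neg_neg]
  have r1w : v 2 - v 1 = (‖s1‖/(‖s1‖+‖s4‖)) • a := by
    conv_lhs => rw [← hs1, ds1]
  have r2u : v 1 - v 2 = (‖s1‖/(‖s1‖+‖s4‖)) • (-a) := by
    have h1 : v 1 - v 2 = -s1 := by rw [hs1]; abel
    rw [h1]; conv_lhs => rw [ds1]
    rw [← smul_neg]
  have r2w : v 3 - v 2 = (‖s2‖/(‖s2‖+‖s5‖)) • b := by
    conv_lhs => rw [← hs2, ds2]
  have r3u : v 2 - v 3 = (‖s2‖/(‖s2‖+‖s5‖)) • (-b) := by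
    have h1 : v 2 - v 3 = -s2 := by rw [hs2]; abel
    rw [h1]; conv_lhs => rw [ds2]
    rw [← smul_neg]
  have r3w : v 4 - v 3 = (‖s3‖/(‖s0‖+‖s3‖)) • c := by
    conv_lhs => rw [← hs3, ds3]
  have r4u : v 3 - v 4 = (‖s3‖/(‖s0‖+‖s3‖)) • (-c) := by
    have h1 : v 3 - v 4 = -s3 := by rw [hs3]; abel
    rw [h1]; conv_lhs => rw [ds3]
    rw [← smul_neg]
  have r4w : v 5 - v 4 = (‖s4‖/(‖s1‖+‖s4‖)) • (-a) := by
    conv_lhs => rw [← hs4, ds4]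
  have r5u : v 4 - v 5 = (‖s4‖/(‖s1‖+‖s4‖)) • a := by
    have h1 : v 4 - v 5 = -s4 := by rw [hs4]; abel
    rw [h1]; conv_lhs => rw [ds4]
    rw [smul_neg, neg_neg]
  have r5w : v 0 - v 5 = (‖s5‖/(‖s2‖+‖s5‖)) • (-b) := by
    conv_lhs => rw [← hs5, ds5]
  -- conclude
  intro i
  fin_cases i
  · show InnerProductGeometry.angle (v 5 - v 0) (v 1 - v 0) = 2 * π / 3
    rw [r0u, r0w]
    exact angle120_smul pw2 pu0 hb0 nc0 fb_nc
  · show InnerProductGeometry.angle (v 0 - v 1) (v 2 - v 1) = 2 * π / 3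
    rw [r1u, r1w]
    exact angle120_smul pu0 pu1 hc0 ha0 fc_a
  · show InnerProductGeometry.angle (v 1 - v 2) (v 3 - v 2) = 2 * π / 3
    rw [r2u, r2w]
    exact angle120_smul pu1 pu2 na0 hb0 fna_b
  · show InnerProductGeometry.angle (v 2 - v 3) (v 4 - v 3) = 2 * π / 3
    rw [r3u, r3w]
    exact angle120_smul pu2 pw0 nb0 hc0 fnb_c
  · show InnerProductGeometry.angle (v 3 - v 4) (v 5 - v 4) = 2 * π / 3
    rw [r4u, r4w]
    exact angle120_smul pw0 pw1 nc0 na0 fnc_na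
  · show InnerProductGeometry.angle (v 4 - v 5) (v 0 - v 5) = 2 * π / 3
    rw [r5u, r5w]
    exact angle120_smul pw1 pw2 ha0 nb0 fa_nb
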